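/- Let N be a sufficiently large positive integer, X the unique real solution of X log X = N, and τ = X^{−23/25}. Let S(α) = Σ_{p ≤ X} e(α[p log p]) log p (sum over primes p ≤ X). Then for all real α with |α| ≤ τ, S(α) = Σ_{n ≤ X} Λ(n) e(α n log n) + O(X^{1/2}). -/

import Mathlib

open Real Finset

/-- `e(t) = e^{2πit}`. -/
noncomputable def ee (t : ℝ) : ℂ := Complex.exp (2 * Real.pi * Complex.I * t)

/-- `S(α) = Σ_{p ≤ X} e(α⌊p log p⌋) log p`, the sum running over primes `p ≤ X`. -/
noncomputable def S (X : ℝ) (α : ℝ) : ℂ :=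
  ∑ p ∈ (Finset.range (⌊X⌋₊ + 1)).filter Nat.Prime,
    (Real.log p : ℂ) * ee (α * (⌊(p : ℝ) * Real.log p⌋ : ℝ))

/-- The exponential sum `Σ_{n ≤ X} Λ(n) e(α n log n)` over positive integers `n ≤ X`. -/
noncomputable def T (X : ℝ) (α : ℝ) : ℂ :=
  ∑ n ∈ Finset.Icc 1 ⌊X⌋₊,
    ((ArithmeticFunction.vonMangoldt n : ℝ) : ℂ) * ee (α * ((n : ℝ) * Real.log n))

lemma ee_norm (t : ℝ) : ‖ee t‖ = 1 := by
  rw [ee, Complex.norm_exp]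
  norm_num [Complex.mul_re, Complex.mul_im]

lemma ee_mul (a b : ℝ) : ee (a + b) = ee a * ee b := by
  rw [ee, ee, ee, ← Complex.exp_add]; push_cast; ring_nf

lemma ee_diff_le (a b : ℝ) (h : 2 * π * |a - b| ≤ 1) :
    ‖ee a - ee b‖ ≤ 2 * (2 * π * |a - b|) := by
  have hd : ee a - ee b = ee b * (ee (a - b) - 1) := by
    rw [mul_sub, ← ee_mul]; ring_nf
  have e1 : (2 * (π : ℂ) * Complex.I * ((a : ℂ) - b)) = ((2 * π * (a - b) : ℝ) : ℂ) * Complex.I := by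
    push_cast; ring
  have hz : ‖(2 * (π : ℂ) * Complex.I * ((a : ℂ) - b))‖ = 2 * π * |a - b| := by
    rw [e1, norm_mul, Complex.norm_real, Complex.norm_I, mul_one, Real.norm_eq_abs, abs_mul, abs_mul,
      abs_two, abs_of_pos pi_pos]
  rw [hd, norm_mul, ee_norm, one_mul]
  calc ‖ee (a - b) - 1‖ ≤ 2 * ‖(2 * (π : ℂ) * Complex.I * ((a : ℂ) - b))‖ := by
        rw [ee]; push_cast
        exact Complex.norm_exp_sub_one_le (by rw [hz]; exact h)
      _ = 2 * (2 * π * |a - b|) := by rw [hz]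

lemma log_le_mul_rpow {ε x : ℝ} (hε : 0 < ε) (hx : 1 ≤ x) : Real.log x ≤ ε⁻¹ * x ^ ε := by
  have hx0 : 0 < x := lt_of_lt_of_le one_pos hx
  have h1 : Real.log (x ^ ε) ≤ x ^ ε := by
    have := Real.log_le_sub_one_of_pos (Real.rpow_pos_of_pos hx0 ε)
    linarith
  rw [Real.log_rpow hx0] at h1
  calc Real.log x = ε⁻¹ * (ε * Real.log x) := by field_simp
    _ ≤ ε⁻¹ * x ^ ε := by
        exact mul_le_mul_of_nonneg_left h1 (inv_nonneg.2 hε.le)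

lemma theta_le (n : ℕ) :
    ∑ p ∈ (Finset.range (n + 1)).filter Nat.Prime, Real.log p ≤ n * Real.log 4 := by
  have h4 : ((primorial n : ℕ) : ℝ) ≤ (4 : ℝ) ^ n := by
    exact_mod_cast primorial_le_4_pow n
  have hlog : ∑ p ∈ (Finset.range (n + 1)).filter Nat.Prime, Real.log p
      = Real.log ((primorial n : ℕ) : ℝ) := by
    rw [primorial]
    rw [← Real.log_prod (fun p hp => by
      have := (Finset.mem_filter.mp hp).2.pos
      positivity)]
    push_cast
    rfl
  have hpos : (0 : ℝ) < ((primorial n : ℕ) : ℝ) := by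
    have : 0 < primorial n := Finset.prod_pos fun p hp => (Finset.mem_filter.mp hp).2.pos
    exact_mod_cast this
  rw [hlog]
  calc Real.log _ ≤ Real.log ((4 : ℝ) ^ n) := by
        apply Real.log_le_log hpos h4
    _ = n * Real.log 4 := by rw [Real.log_pow]

set_option maxHeartbeats 2000000 in
theorem S_eq_vonMangoldt_sum :
    ∃ C : ℝ, 0 < C ∧ ∃ N₀ : ℕ, ∀ N : ℕ, N₀ ≤ N →
      ∀ X : ℝ, 1 < X → X * Real.log X = N →
        ∀ α : ℝ, |α| ≤ X ^ ((-23 : ℝ)/25) →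
          ‖S X α - T X α‖ ≤ C * X ^ ((1 : ℝ)/2) := by
  classical
  refine ⟨2000, by norm_num, 10 ^ 6, ?_⟩
  intro N hN X hX1 hXN α hα
  have hX0 : (0 : ℝ) < X := by linarith
  have hX1' : (1 : ℝ) ≤ X := hX1.le
  have hXsq : (N : ℝ) < X ^ 2 := by
    have hlx : Real.log X < X := by
      have := Real.log_le_sub_one_of_pos hX0; linarith
    have hlpos : 0 < Real.log X := Real.log_pos hX1
    nlinarith [hXN]
  have hX1000 : (1000 : ℝ) < X := by
    have h6 : (10 ^ 6 : ℝ) ≤ (N : ℝ) := by exact_mod_cast hN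
    nlinarith
  have hlogX1 : (1 : ℝ) ≤ Real.log X := by
    rw [Real.le_log_iff_exp_le hX0]
    calc Real.exp 1 ≤ 3 := Real.exp_one_lt_d9.le.trans (by norm_num)
      _ ≤ X := by linarith
  have hlog12 : Real.log X ≤ 12 * X ^ ((1 : ℝ)/12) := by
    have := log_le_mul_rpow (by norm_num : (0:ℝ) < 1/12) hX1'
    simpa using this
  -- |α| ≤ 1/7
  have hXhalf7 : (7 : ℝ) ≤ X ^ ((1 : ℝ)/2) := by
    rw [← Real.sqrt_eq_rpow]
    rw [show (7:ℝ) = √49 by rw [show (49:ℝ) = 7^2 by norm_num, Real.sqrt_sq]; norm_num]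
    exact Real.sqrt_le_sqrt (by linarith)
  have hα7 : |α| ≤ 1 / 7 := by
    calc |α| ≤ X ^ ((-23 : ℝ)/25) := hα
      _ ≤ X ^ ((-1 : ℝ)/2) := Real.rpow_le_rpow_of_exponent_le hX1' (by norm_num)
      _ = (X ^ ((1 : ℝ)/2))⁻¹ := by
          rw [show ((-1:ℝ)/2) = -(1/2) by norm_num, Real.rpow_neg hX0.le]
      _ ≤ 1 / 7 := (inv_anti₀ (by norm_num) hXhalf7).trans_eq (one_div (7:ℝ)).symm
  have hαnn : 0 ≤ |α| := abs_nonneg α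
  set M := ⌊X⌋₊ with hM
  have hMX : (M : ℝ) ≤ X := Nat.floor_le hX0.le
  have hXM : X < (M : ℝ) + 1 := Nat.lt_floor_add_one X
  set P := (Finset.range (M + 1)).filter Nat.Prime with hP
  have hPsub : P ⊆ Finset.Icc 1 M := by
    intro p hp
    rw [Finset.mem_filter, Finset.mem_range] at hp
    rw [Finset.mem_Icc]
    exact ⟨hp.2.one_lt.le.trans' (by norm_num), Nat.lt_succ_iff.mp hp.1⟩
  set f : ℕ → ℂ := fun n =>
    ((ArithmeticFunction.vonMangoldt n : ℝ) : ℂ) * ee (α * ((n : ℝ) * Real.log n)) with hf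
  set E := Finset.Icc 1 M \ P with hE
  have hsplit : T X α = (∑ n ∈ E, f n) + ∑ p ∈ P, f p := (Finset.sum_sdiff hPsub).symm
  have hST : S X α - T X α
      = (∑ p ∈ P, ((Real.log p : ℂ) * ee (α * (⌊(p : ℝ) * Real.log p⌋ : ℝ)) - f p))
        - ∑ n ∈ E, f n := by
    rw [S, hsplit, Finset.sum_sub_distrib]; ring
  have hnorm : ‖S X α - T X α‖
      ≤ (∑ p ∈ P, ‖(Real.log p : ℂ) * ee (α * (⌊(p : ℝ) * Real.log p⌋ : ℝ)) - f p‖)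
        + ∑ n ∈ E, ‖f n‖ := by
    rw [hST]
    exact (norm_sub_le _ _).trans (by
      gcongr <;> exact norm_sum_le _ _)
  -- Part 1 : the sum over primes
  have hπ : π < 3.15 := Real.pi_lt_d2
  have hlogXnn : (0:ℝ) ≤ Real.log X := by linarith
  have hterm : ∀ p ∈ P, ‖(Real.log p : ℂ) * ee (α * (⌊(p : ℝ) * Real.log p⌋ : ℝ)) - f p‖
      ≤ Real.log X * (4 * π * |α|) := by
    intro p hp
    rw [Finset.mem_filter, Finset.mem_range] at hp
    obtain ⟨hpM, hpp⟩ := hp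
    have hp1 : (1:ℝ) ≤ (p:ℝ) := by exact_mod_cast hpp.one_lt.le
    have hpX : (p:ℝ) ≤ X := by
      have : (p:ℝ) ≤ (M:ℝ) := by exact_mod_cast Nat.lt_succ_iff.mp hpM
      linarith
    set t := (p:ℝ) * Real.log p with ht
    have habs : |α * (⌊t⌋:ℝ) - α * t| ≤ |α| := by
      rw [← mul_sub, abs_mul]
      have h1 : |(⌊t⌋:ℝ) - t| ≤ 1 := by
        rw [abs_le]
        constructor
        · linarith [Int.sub_one_lt_floor t]
        · linarith [Int.floor_le t]
      calc |α| * |(⌊t⌋:ℝ) - t| ≤ |α| * 1 := mul_le_mul_of_nonneg_left h1 hαnn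
        _ = |α| := mul_one _
    have h2π : 2 * π * |α * (⌊t⌋:ℝ) - α * t| ≤ 1 := by
      have hle : |α * (⌊t⌋:ℝ) - α * t| ≤ 1/7 := habs.trans hα7
      nlinarith [abs_nonneg (α * (⌊t⌋:ℝ) - α * t), Real.pi_pos]
    have hdiff := ee_diff_le (α * (⌊t⌋:ℝ)) (α * t) h2π
    have hΛp : ((ArithmeticFunction.vonMangoldt p : ℝ) : ℂ) = ((Real.log p : ℝ) : ℂ) := by
      rw [ArithmeticFunction.vonMangoldt_apply_prime hpp]
    have hfp : f p = (Real.log p : ℂ) * ee (α * t) := by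
      simp only [hf, ht]
      rw [hΛp]
    rw [hfp, ← mul_sub, norm_mul, Complex.norm_real, Real.norm_eq_abs,
      abs_of_nonneg (Real.log_nonneg hp1)]
    have hlogpX : Real.log p ≤ Real.log X := Real.log_le_log (by linarith) hpX
    calc Real.log p * ‖ee (α * (⌊t⌋:ℝ)) - ee (α * t)‖
        ≤ Real.log X * (2 * (2 * π * |α * (⌊t⌋:ℝ) - α * t|)) := by
          apply mul_le_mul hlogpX hdiff (norm_nonneg _) hlogXnn
      _ ≤ Real.log X * (4 * π * |α|) := by
          apply mul_le_mul_of_nonneg_left _ hlogXnn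
          nlinarith [Real.pi_pos, habs]
  have hcardP : ((P.card : ℕ) : ℝ) ≤ 2 * X := by
    have h1 : P.card ≤ M + 1 := by
      calc P.card ≤ (Finset.range (M+1)).card := Finset.card_filter_le _ _
        _ = M + 1 := Finset.card_range _
    calc ((P.card : ℕ) : ℝ) ≤ ((M + 1 : ℕ) : ℝ) := by exact_mod_cast h1
      _ = (M:ℝ) + 1 := by push_cast; ring
      _ ≤ 2 * X := by linarith
  have hpart1 : (∑ p ∈ P, ‖(Real.log p : ℂ) * ee (α * (⌊(p : ℝ) * Real.log p⌋ : ℝ)) - f p‖)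
      ≤ 303 * X ^ ((1:ℝ)/2) := by
    have hsum : (∑ p ∈ P, ‖(Real.log p : ℂ) * ee (α * (⌊(p : ℝ) * Real.log p⌋ : ℝ)) - f p‖)
        ≤ (P.card) • (Real.log X * (4 * π * |α|)) := Finset.sum_le_card_nsmul _ _ _ hterm
    rw [nsmul_eq_mul] at hsum
    have hXexp : X ^ (1:ℝ) * X ^ ((1:ℝ)/12) * X ^ ((-23:ℝ)/25) = X ^ ((49:ℝ)/300) := by
      rw [← Real.rpow_add hX0, ← Real.rpow_add hX0]; norm_num
    have h4950 : X ^ ((49:ℝ)/300) ≤ X ^ ((1:ℝ)/2) :=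
      Real.rpow_le_rpow_of_exponent_le hX1' (by norm_num)
    have hrpownn : (0:ℝ) ≤ X ^ ((49:ℝ)/300) := (Real.rpow_pos_of_pos hX0 _).le
    have hrpownn2 : (0:ℝ) ≤ X ^ ((1:ℝ)/2) := (Real.rpow_pos_of_pos hX0 _).le
    calc (∑ p ∈ P, ‖(Real.log p : ℂ) * ee (α * (⌊(p : ℝ) * Real.log p⌋ : ℝ)) - f p‖)
        ≤ (P.card : ℝ) * (Real.log X * (4 * π * |α|)) := hsum
      _ ≤ (2 * X) * ((12 * X ^ ((1:ℝ)/12)) * (4 * π * X ^ ((-23:ℝ)/25))) := by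
          apply mul_le_mul hcardP _ (by positivity) (by linarith)
          apply mul_le_mul hlog12 _ (by positivity) (by positivity)
          apply mul_le_mul_of_nonneg_left hα (by positivity)
      _ = (96 * π) * (X ^ (1:ℝ) * X ^ ((1:ℝ)/12) * X ^ ((-23:ℝ)/25)) := by
          rw [Real.rpow_one]; ring
      _ = (96 * π) * X ^ ((49:ℝ)/300) := by rw [hXexp]
      _ ≤ (96 * 3.15) * X ^ ((1:ℝ)/2) := by
          apply mul_le_mul (by linarith) h4950 hrpownn (by norm_num)
      _ ≤ 303 * X ^ ((1:ℝ)/2) := by nlinarith [hrpownn2]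
  -- Part 2 : non-primes
  have hEnorm : ∀ n ∈ E, ‖f n‖ = ArithmeticFunction.vonMangoldt n := by
    intro n _
    rw [hf]
    simp only [norm_mul, ee_norm, mul_one, Complex.norm_real, Real.norm_eq_abs]
    exact abs_of_nonneg ArithmeticFunction.vonMangoldt_nonneg
  have key : ∀ n ∈ E, ArithmeticFunction.vonMangoldt n ≠ 0 →
      ((∃ p, Nat.Prime p ∧ n = p ^ 2) ∨ (∃ p k, Nat.Prime p ∧ 3 ≤ k ∧ n = p ^ k)) := by
    intro n hn hΛ
    obtain ⟨hnIcc, hnP⟩ := Finset.mem_sdiff.mp hn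
    obtain ⟨p, k, hp, hk, hpk⟩ := ArithmeticFunction.vonMangoldt_ne_zero_iff.mp hΛ
    have hpp : p.Prime := hp.nat_prime
    have hnM : n ≤ M := (Finset.mem_Icc.mp hnIcc).2
    rcases Nat.lt_or_ge k 2 with h2 | h2
    · exfalso
      have hk1 : k = 1 := by omega
      have hnp : n = p := by rw [← hpk, hk1, pow_one]
      apply hnP
      rw [hP, Finset.mem_filter, Finset.mem_range]
      exact ⟨Nat.lt_succ_of_le hnM, hnp ▸ hpp⟩
    rcases Nat.lt_or_ge k 3 with h3 | h3
    · left
      refine ⟨p, hpp, ?_⟩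
      have hk2 : k = 2 := by omega
      rw [← hpk, hk2]
    · right
      exact ⟨p, k, hpp, h3, hpk.symm⟩
  have hB : ∑ n ∈ E.filter (fun n => ∃ p, Nat.Prime p ∧ n = p ^ 2),
      (ArithmeticFunction.vonMangoldt n : ℝ) ≤ 2 * X ^ ((1:ℝ)/2) := by
    set R := Nat.sqrt M with hR
    have hsub : E.filter (fun n => ∃ p, Nat.Prime p ∧ n = p ^ 2)
        ⊆ Finset.image (fun p => p ^ 2) ((Finset.range (R+1)).filter Nat.Prime) := by
      intro n hn
      obtain ⟨hnE, p, hpp, rfl⟩ := Finset.mem_filter.mp hn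
      have hnM : p ^ 2 ≤ M := (Finset.mem_Icc.mp (Finset.mem_sdiff.mp hnE).1).2
      have hpR : p ≤ R := Nat.le_sqrt'.mpr hnM
      exact Finset.mem_image.mpr ⟨p,
        Finset.mem_filter.mpr ⟨Finset.mem_range.mpr (Nat.lt_succ_of_le hpR), hpp⟩, rfl⟩
    have hRX : (R:ℝ) ≤ X ^ ((1:ℝ)/2) := by
      rw [← Real.sqrt_eq_rpow]
      rw [Real.le_sqrt (by positivity) hX0.le]
      calc ((R:ℝ))^2 = ((R^2 : ℕ) : ℝ) := by push_cast; ring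
        _ ≤ (M:ℝ) := by exact_mod_cast Nat.sqrt_le' M
        _ ≤ X := hMX
    have hlog4 : Real.log 4 ≤ 2 := by
      rw [show (4:ℝ) = 2^2 by norm_num, Real.log_pow]
      push_cast
      nlinarith [Real.log_two_lt_d9]
    calc ∑ n ∈ E.filter (fun n => ∃ p, Nat.Prime p ∧ n = p ^ 2),
          (ArithmeticFunction.vonMangoldt n : ℝ)
        ≤ ∑ n ∈ Finset.image (fun p => p ^ 2) ((Finset.range (R+1)).filter Nat.Prime),
            (ArithmeticFunction.vonMangoldt n : ℝ) :=
          Finset.sum_le_sum_of_subset_of_nonneg hsub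
            (fun _ _ _ => ArithmeticFunction.vonMangoldt_nonneg)
      _ = ∑ p ∈ (Finset.range (R+1)).filter Nat.Prime,
            (ArithmeticFunction.vonMangoldt (p ^ 2) : ℝ) :=
          Finset.sum_image (fun a _ b _ h => Nat.pow_left_injective two_ne_zero h)
      _ = ∑ p ∈ (Finset.range (R+1)).filter Nat.Prime, Real.log p := by
          apply Finset.sum_congr rfl
          intro p hp
          rw [ArithmeticFunction.vonMangoldt_apply_pow two_ne_zero,
            ArithmeticFunction.vonMangoldt_apply_prime (Finset.mem_filter.mp hp).2]
      _ ≤ R * Real.log 4 := theta_le R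
      _ ≤ X ^ ((1:ℝ)/2) * 2 :=
          mul_le_mul hRX hlog4 (Real.log_nonneg (by norm_num)) (by positivity)
      _ = 2 * X ^ ((1:ℝ)/2) := mul_comm _ _
  have hA : ∑ n ∈ E.filter (fun n => ∃ p k, Nat.Prime p ∧ 3 ≤ k ∧ n = p ^ k),
      (ArithmeticFunction.vonMangoldt n : ℝ) ≤ 864 * X ^ ((1:ℝ)/2) := by
    set c := ⌊X ^ ((1:ℝ)/3)⌋₊ with hc
    set L := ⌊Real.logb 2 X⌋₊ with hL
    have hlog2pos : (0:ℝ) < Real.log 2 := Real.log_pos (by norm_num)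
    have hsub : E.filter (fun n => ∃ p k, Nat.Prime p ∧ 3 ≤ k ∧ n = p ^ k)
        ⊆ Finset.image (fun q : ℕ × ℕ => q.1 ^ q.2) (Finset.Icc 2 c ×ˢ Finset.Icc 3 L) := by
      intro n hn
      obtain ⟨hnE, p, k, hpp, hk3, rfl⟩ := Finset.mem_filter.mp hn
      have hnM : p ^ k ≤ M := (Finset.mem_Icc.mp (Finset.mem_sdiff.mp hnE).1).2
      have hnX : ((p:ℝ)) ^ k ≤ X := by
        calc ((p:ℝ))^k = ((p^k : ℕ) : ℝ) := by push_cast; ring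
          _ ≤ (M:ℝ) := by exact_mod_cast hnM
          _ ≤ X := hMX
      have hp2 : 2 ≤ p := hpp.two_le
      have hp1R : (1:ℝ) ≤ (p:ℝ) := by exact_mod_cast hp2.trans' (by norm_num)
      have hpc : p ≤ c := by
        apply Nat.le_floor
        have h3 : ((p:ℝ))^(3:ℕ) ≤ X := le_trans (pow_le_pow_right₀ hp1R hk3) hnX
        have h33 := Real.rpow_le_rpow (by positivity) h3 (by norm_num : (0:ℝ) ≤ 1/3)
        rwa [← Real.rpow_natCast (p:ℝ) 3, ← Real.rpow_mul (by positivity),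
          show ((3:ℕ):ℝ) * ((1:ℝ)/3) = 1 by norm_num, Real.rpow_one] at h33
      have hkL : k ≤ L := by
        apply Nat.le_floor
        have h2k : ((2:ℝ))^k ≤ X := by
          calc ((2:ℝ))^k ≤ ((p:ℝ))^k := by
                apply pow_le_pow_left₀ (by norm_num) (by exact_mod_cast hp2)
            _ ≤ X := hnX
        have hklog : (k:ℝ) * Real.log 2 ≤ Real.log X := by
          rw [← Real.log_pow]
          exact Real.log_le_log (by positivity) h2k
        rw [Real.logb, le_div_iff₀ hlog2pos]
        exact hklog
      exact Finset.mem_image.mpr ⟨(p, k),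
        Finset.mem_product.mpr ⟨Finset.mem_Icc.mpr ⟨hp2, hpc⟩, Finset.mem_Icc.mpr ⟨hk3, hkL⟩⟩, rfl⟩
    have hcX : (c:ℝ) ≤ X ^ ((1:ℝ)/3) := Nat.floor_le (by positivity)
    have hX13 : (1:ℝ) ≤ X ^ ((1:ℝ)/3) := by
      have h := Real.rpow_le_rpow_of_exponent_le hX1' (by norm_num : (0:ℝ) ≤ (1:ℝ)/3)
      rwa [Real.rpow_zero] at h
    have hLX : (L:ℝ) ≤ 2 * Real.log X := by
      have h1 : (L:ℝ) ≤ Real.logb 2 X := Nat.floor_le (Real.logb_nonneg (by norm_num) hX1')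
      have h2 : Real.logb 2 X ≤ 2 * Real.log X := by
        rw [Real.logb, div_le_iff₀ hlog2pos]
        nlinarith [Real.log_two_gt_d9]
      linarith
    have hcard : (((E.filter (fun n => ∃ p k, Nat.Prime p ∧ 3 ≤ k ∧ n = p ^ k)).card : ℕ) : ℝ)
        ≤ 6 * X ^ ((1:ℝ)/3) * Real.log X := by
      have h1 : (E.filter (fun n => ∃ p k, Nat.Prime p ∧ 3 ≤ k ∧ n = p ^ k)).card
          ≤ (c + 1) * (L + 1) := by
        calc (E.filter _).card ≤ (Finset.image (fun q : ℕ × ℕ => q.1 ^ q.2)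
              (Finset.Icc 2 c ×ˢ Finset.Icc 3 L)).card := Finset.card_le_card hsub
          _ ≤ (Finset.Icc 2 c ×ˢ Finset.Icc 3 L).card := Finset.card_image_le
          _ = (Finset.Icc 2 c).card * (Finset.Icc 3 L).card := Finset.card_product _ _
          _ = (c + 1 - 2) * (L + 1 - 3) := by rw [Nat.card_Icc, Nat.card_Icc]
          _ ≤ (c + 1) * (L + 1) := Nat.mul_le_mul (Nat.sub_le _ _) (Nat.sub_le _ _)
      calc (((E.filter (fun n => ∃ p k, Nat.Prime p ∧ 3 ≤ k ∧ n = p ^ k)).card : ℕ) : ℝ)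
          ≤ (((c + 1) * (L + 1) : ℕ) : ℝ) := by exact_mod_cast h1
        _ = ((c:ℝ) + 1) * ((L:ℝ) + 1) := by push_cast; ring
        _ ≤ (2 * X ^ ((1:ℝ)/3)) * (3 * Real.log X) := by
            apply mul_le_mul (by linarith) (by linarith) (by positivity) (by positivity)
        _ = 6 * X ^ ((1:ℝ)/3) * Real.log X := by ring
    have hbound : ∀ n ∈ E.filter (fun n => ∃ p k, Nat.Prime p ∧ 3 ≤ k ∧ n = p ^ k),
        (ArithmeticFunction.vonMangoldt n : ℝ) ≤ Real.log X := by
      intro n hn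
      obtain ⟨hnE, _⟩ := Finset.mem_filter.mp hn
      obtain ⟨hn1, hnM⟩ := Finset.mem_Icc.mp (Finset.mem_sdiff.mp hnE).1
      have hnX : (n:ℝ) ≤ X := le_trans (by exact_mod_cast hnM) hMX
      calc (ArithmeticFunction.vonMangoldt n : ℝ) ≤ Real.log n :=
            ArithmeticFunction.vonMangoldt_le_log
        _ ≤ Real.log X := Real.log_le_log (by exact_mod_cast hn1) hnX
    calc ∑ n ∈ E.filter (fun n => ∃ p k, Nat.Prime p ∧ 3 ≤ k ∧ n = p ^ k),
          (ArithmeticFunction.vonMangoldt n : ℝ)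
        ≤ (E.filter (fun n => ∃ p k, Nat.Prime p ∧ 3 ≤ k ∧ n = p ^ k)).card • Real.log X :=
          Finset.sum_le_card_nsmul _ _ _ hbound
      _ = (((E.filter (fun n => ∃ p k, Nat.Prime p ∧ 3 ≤ k ∧ n = p ^ k)).card : ℕ) : ℝ)
            * Real.log X := nsmul_eq_mul _ _
      _ ≤ (6 * X ^ ((1:ℝ)/3) * Real.log X) * Real.log X :=
          mul_le_mul_of_nonneg_right hcard hlogXnn
      _ ≤ (6 * X ^ ((1:ℝ)/3) * (12 * X ^ ((1:ℝ)/12))) * (12 * X ^ ((1:ℝ)/12)) := by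
          apply mul_le_mul _ hlog12 hlogXnn (by positivity)
          apply mul_le_mul_of_nonneg_left hlog12 (by positivity)
      _ = 864 * (X ^ ((1:ℝ)/3) * X ^ ((1:ℝ)/12) * X ^ ((1:ℝ)/12)) := by ring
      _ = 864 * X ^ ((1:ℝ)/2) := by
          rw [← Real.rpow_add hX0, ← Real.rpow_add hX0]; norm_num
  have hpart2 : ∑ n ∈ E, ‖f n‖ ≤ 866 * X ^ ((1:ℝ)/2) := by
    rw [Finset.sum_congr rfl hEnorm]
    calc ∑ n ∈ E, (ArithmeticFunction.vonMangoldt n : ℝ)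
        = ∑ n ∈ E.filter (fun n => (∃ p, Nat.Prime p ∧ n = p ^ 2)
            ∨ (∃ p k, Nat.Prime p ∧ 3 ≤ k ∧ n = p ^ k)),
            (ArithmeticFunction.vonMangoldt n : ℝ) :=
          (Finset.sum_filter_of_ne key).symm
      _ ≤ ∑ n ∈ E.filter (fun n => ∃ p, Nat.Prime p ∧ n = p ^ 2),
            (ArithmeticFunction.vonMangoldt n : ℝ)
          + ∑ n ∈ E.filter (fun n => ∃ p k, Nat.Prime p ∧ 3 ≤ k ∧ n = p ^ k),
            (ArithmeticFunction.vonMangoldt n : ℝ) := by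
          rw [Finset.filter_or, ← Finset.sum_union_inter]
          have h0 : (0:ℝ) ≤ ∑ n ∈ E.filter (fun n => ∃ p, Nat.Prime p ∧ n = p ^ 2)
              ∩ E.filter (fun n => ∃ p k, Nat.Prime p ∧ 3 ≤ k ∧ n = p ^ k),
              (ArithmeticFunction.vonMangoldt n : ℝ) :=
            Finset.sum_nonneg fun _ _ => ArithmeticFunction.vonMangoldt_nonneg
          linarith
      _ ≤ 2 * X ^ ((1:ℝ)/2) + 864 * X ^ ((1:ℝ)/2) := add_le_add hB hA
      _ = 866 * X ^ ((1:ℝ)/2) := by ring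
  have hfinal := hnorm.trans (add_le_add hpart1 hpart2)
  calc ‖S X α - T X α‖ ≤ 303 * X ^ ((1:ℝ)/2) + 866 * X ^ ((1:ℝ)/2) := hfinal
    _ ≤ 2000 * X ^ ((1:ℝ)/2) := by
        nlinarith [Real.rpow_pos_of_pos hX0 ((1:ℝ)/2)]
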